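/- Let j ≥ 3 and 0 ≤ r ≤ j−3 be integers. Then the rational number Σ_{s=1}^{j−1} (−1)^s · (s/(j+1−s)) · binom(j+1−s, s−r) · C_{j−1−s} equals 0, where C_n is the n-th Catalan number and binom(a,b) = 0 when b < 0 or b > a. -/

import Mathlib

/-- The binomial coefficient `binom a b : ℚ` for integer arguments, equal to `0`
when `b < 0` or `b > a`. -/
def binom (a b : ℤ) : ℚ :=
  if 0 ≤ b ∧ b ≤ a then (a.toNat.choose b.toNat : ℚ) else 0

lemma binom_eq_choose {a b : ℤ} (h0 : 0 ≤ b) (h1 : b ≤ a) :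
    binom a b = (a.toNat.choose b.toNat : ℚ) := if_pos ⟨h0, h1⟩

lemma binom_eq_zero {a b : ℤ} (h : b < 0 ∨ a < b) : binom a b = 0 := by
  rw [binom, if_neg]; rintro ⟨h0, h1⟩; omega

lemma choose_step (a k : ℕ) :
    (k+1) * ((a+1) * a.choose (k+1)) = (a-k) * ((a+1-k) * (a+1).choose k) := by
  have h1 : (a+1) * a.choose (k+1) = (a+1).choose (k+2) * (k+2) :=
    Nat.add_one_mul_choose_eq a (k+1)
  have h2 : (a+1).choose (k+2) * (k+2) = (a+1).choose (k+1) * (a+1-(k+1)) :=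
    Nat.choose_succ_right_eq (a+1) (k+1)
  have h3 : (a+1).choose (k+1) * (k+1) = (a+1).choose k * (a+1-k) :=
    Nat.choose_succ_right_eq (a+1) k
  calc (k+1) * ((a+1) * a.choose (k+1)) = (k+1) * ((a+1).choose (k+1) * (a-k)) := by
        rw [h1, h2]; congr 2; omega
    _ = (a-k) * ((a+1).choose (k+1) * (k+1)) := by ring
    _ = (a-k) * ((a+1-k) * (a+1).choose k) := by rw [h3]; ring

lemma catalan_step (n : ℕ) : (n+2) * catalan (n+1) = 2*(2*n+1) * catalan n := by
  apply Nat.eq_of_mul_eq_mul_left (show 0 < n+1 by omega)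
  have h1 := Nat.succ_mul_centralBinom_succ n
  have h2 := succ_mul_catalan_eq_centralBinom n
  have h3 := succ_mul_catalan_eq_centralBinom (n+1)
  calc (n+1) * ((n+2) * catalan (n+1)) = (n+1+1) * catalan (n+1) * (n+1) := by ring
    _ = (n+1).centralBinom * (n+1) := by rw [h3]
    _ = (n+1) * (n+1).centralBinom := by ring
    _ = 2*(2*n+1) * n.centralBinom := h1
    _ = 2*(2*n+1) * ((n+1) * catalan n) := by rw [h2]
    _ = (n+1) * (2*(2*n+1) * catalan n) := by ring

lemma telescope (n : ℕ) (f g : ℕ → ℚ) (h : ∀ s, 1 ≤ s → s ≤ n → f s = g (s+1) - g s) :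
    ∑ s ∈ Finset.Icc 1 n, f s = g (n+1) - g 1 := by
  induction n with
  | zero => rw [Finset.Icc_eq_empty (by omega), Finset.sum_empty]; ring
  | succ n ih =>
    rw [Finset.sum_Icc_succ_top (by omega), ih (fun s h1 h2 => h s h1 (by omega)),
      h (n+1) (by omega) le_rfl]
    ring

def gcore (j d t : ℕ) : ℚ :=
  (-1:ℚ)^t * (2*((t:ℚ)-(d:ℚ))*(2*(t:ℚ)-2*(j:ℚ)+1)) * binom ((j:ℤ)-t) ((t:ℤ)-d) *
    (catalan (j-1-t) : ℚ)

lemma core (j d : ℕ) (hd : 1 ≤ d) (hdj : d + 2 ≤ j) :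
    ∑ s ∈ Finset.Icc 1 (j-1),
      (-1:ℚ)^s * binom ((j:ℤ)-s) ((s:ℤ)-d) * (catalan (j-1-s) : ℚ) = 0 := by
  have hd2 : (d:ℚ) + 2 ≤ (j:ℚ) := by exact_mod_cast hdj
  have hDm : ((j:ℚ)-d)*((j:ℚ)-d-1) ≠ 0 :=
    mul_ne_zero (ne_of_gt (by linarith)) (ne_of_gt (by linarith))
  have H : ∀ s, 1 ≤ s → s ≤ j-1 →
      ((j:ℚ)-d)*((j:ℚ)-d-1) *
        ((-1:ℚ)^s * binom ((j:ℤ)-s) ((s:ℤ)-d) * (catalan (j-1-s) : ℚ))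
      = gcore j d (s+1) - gcore j d s := by
    intro s hs1 hs2
    have hsj : s + 1 ≤ j := by omega
    rcases Nat.lt_or_ge s d with hsd | hds
    · -- s < d : everything vanishes
      have hB1 : binom ((j:ℤ)-(s:ℤ)) ((s:ℤ)-d) = 0 := binom_eq_zero (Or.inl (by omega))
      by_cases hsd1 : s + 1 = d
      · simp only [gcore, hB1]
        have hz : ((s+1:ℕ):ℚ) - (d:ℚ) = 0 := by rw [hsd1, sub_self]
        rw [hz]; ring
      · have hB2 : binom ((j:ℤ)-((s+1:ℕ):ℤ)) (((s+1:ℕ):ℤ)-d) = 0 :=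
          binom_eq_zero (Or.inl (by push_cast; omega))
        simp only [gcore, hB1, hB2]; ring
    · rcases Nat.lt_or_ge (2*s) (j+d-1) with hmain | hbig
      · -- main case : 2s+2 ≤ j+d
        have hcond : 2*s + 2 ≤ j + d := by omega
        set a := j - s - 1 with ha
        set k := s - d with hk
        set n := j - 2 - s with hn
        have hsj2 : s + 2 ≤ j := by omega
        have e1 : ((j:ℤ)-(s:ℤ)).toNat = a + 1 := by omega
        have e2 : ((s:ℤ)-(d:ℤ)).toNat = k := by omega
        have hB1 : binom ((j:ℤ)-(s:ℤ)) ((s:ℤ)-d) = (((a+1).choose k : ℕ) : ℚ) := by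
          rw [binom_eq_choose (by omega) (by omega), e1, e2]
        have e3 : ((j:ℤ)-((s+1:ℕ):ℤ)).toNat = a := by push_cast; omega
        have e4 : (((s+1:ℕ):ℤ)-(d:ℤ)).toNat = k + 1 := by push_cast; omega
        have hB2 : binom ((j:ℤ)-((s+1:ℕ):ℤ)) (((s+1:ℕ):ℤ)-d) = ((a.choose (k+1) : ℕ) : ℚ) := by
          rw [binom_eq_choose (by push_cast; omega) (by push_cast; omega), e3, e4]
        have hxa : (a:ℚ) = (j:ℚ)-(s:ℚ)-1 := by
          have : (a:ℤ) = (j:ℤ)-(s:ℤ)-1 := by omega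
          exact_mod_cast this
        have hxk : (k:ℚ) = (s:ℚ)-(d:ℚ) := by
          have : (k:ℤ) = (s:ℤ)-(d:ℤ) := by omega
          exact_mod_cast this
        have hxn : (n:ℚ) = (j:ℚ)-(s:ℚ)-2 := by
          have : (n:ℤ) = (j:ℤ)-(s:ℤ)-2 := by omega
          exact_mod_cast this
        have hA : ((k:ℚ)+1) * (((a:ℚ)+1) * (a.choose (k+1) : ℚ))
            = ((a:ℚ)-(k:ℚ)) * (((a:ℚ)+1-(k:ℚ)) * ((a+1).choose k : ℚ)) := by
          have h := choose_step a k
          have hka : k ≤ a := by omega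
          have hka1 : k ≤ a + 1 := by omega
          zify [hka, hka1] at h
          exact_mod_cast h
        have hC : ((n:ℚ)+2) * (catalan (n+1) : ℚ) = 2*(2*(n:ℚ)+1) * (catalan n : ℚ) := by
          exact_mod_cast catalan_step n
        rw [hxa, hxk] at hA
        rw [hxn] at hC
        simp only [gcore]
        rw [hB1, hB2, pow_succ,
          show j-1-(s+1) = n by omega, show j-1-s = n+1 by omega]
        push_cast
        linear_combination (-(-1:ℚ)^s * (catalan (n+1) : ℚ)) * hA +
          ((-1:ℚ)^s * ((s:ℚ)+1-(d:ℚ)) * (a.choose (k+1) : ℚ)) * hC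
      · rcases Nat.lt_or_ge (j+d) (2*s) with hzero | hbnd
        · -- 2s ≥ j+d+1 : everything vanishes
          have hB1 : binom ((j:ℤ)-(s:ℤ)) ((s:ℤ)-d) = 0 := binom_eq_zero (Or.inr (by omega))
          have hB2 : binom ((j:ℤ)-((s+1:ℕ):ℤ)) (((s+1:ℕ):ℤ)-d) = 0 :=
            binom_eq_zero (Or.inr (by push_cast; omega))
          simp only [gcore, hB1, hB2]; ring
        · -- boundary : 2s = j+d-1 or 2s = j+d
          have hB2 : binom ((j:ℤ)-((s+1:ℕ):ℤ)) (((s+1:ℕ):ℤ)-d) = 0 :=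
            binom_eq_zero (Or.inr (by push_cast; omega))
          simp only [gcore, hB2]
          rcases Nat.lt_or_ge (2*s) (j+d) with h1 | h1
          · -- 2s = j+d-1
            have h2x : 2*(s:ℚ) = (j:ℚ)+(d:ℚ)-1 := by
              have : 2*(s:ℤ) = (j:ℤ)+(d:ℤ)-1 := by omega
              exact_mod_cast this
            linear_combination (-(-1:ℚ)^s * binom ((j:ℤ)-(s:ℤ)) ((s:ℤ)-d) *
              (catalan (j-1-s) : ℚ) * ((j:ℚ)+(d:ℚ)-2*(s:ℚ))) * h2x
          · -- 2s = j+d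
            have h2x : 2*(s:ℚ) = (j:ℚ)+(d:ℚ) := by
              have : 2*(s:ℤ) = (j:ℤ)+(d:ℤ) := by omega
              exact_mod_cast this
            linear_combination (-(-1:ℚ)^s * binom ((j:ℤ)-(s:ℤ)) ((s:ℤ)-d) *
              (catalan (j-1-s) : ℚ) * ((j:ℚ)+(d:ℚ)-2*(s:ℚ)-1)) * h2x
  have tele := telescope (j-1) _ (gcore j d) H
  rw [show j-1+1 = j by omega] at tele
  have hgj : gcore j d j = 0 := by
    simp only [gcore]
    rw [binom_eq_zero (Or.inr (by omega))]; ring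
  have hg1 : gcore j d 1 = 0 := by
    simp only [gcore]
    rcases eq_or_lt_of_le hd with h | h
    · rw [← h]; norm_num
    · rw [binom_eq_zero (Or.inl (by omega))]; ring
  rw [hgj, hg1] at tele
  have h2 : ((j:ℚ)-d)*((j:ℚ)-d-1) *
      (∑ s ∈ Finset.Icc 1 (j-1),
        (-1:ℚ)^s * binom ((j:ℤ)-s) ((s:ℤ)-d) * (catalan (j-1-s) : ℚ)) = 0 := by
    rw [Finset.mul_sum]
    exact tele.trans (by ring)
  exact (mul_eq_zero.mp h2).resolve_left hDm

lemma binom_pascal (a b : ℤ) (ha : 1 ≤ a) : binom a b = binom (a-1) b + binom (a-1) (b-1) := by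
  by_cases h0 : 0 ≤ b
  · by_cases h1 : b ≤ a
    · -- main region: all via choose
      obtain ⟨n, hn⟩ : ∃ n, a.toNat = n + 1 := ⟨a.toNat - 1, by omega⟩
      by_cases hb0 : b = 0
      · subst hb0
        rw [binom_eq_choose le_rfl h1, binom_eq_choose le_rfl (by omega),
          binom_eq_zero (Or.inl (by omega))]
        simp
      · obtain ⟨m, hm⟩ : ∃ m, b.toNat = m + 1 := ⟨b.toNat - 1, by omega⟩
        have e1 : binom (a-1) b = ((a-1).toNat.choose b.toNat : ℚ) := by
          by_cases h2 : b ≤ a - 1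
          · exact binom_eq_choose h0 h2
          · rw [binom_eq_zero (Or.inr (by omega)), Nat.choose_eq_zero_of_lt (by omega)]
            simp
        have e2 : binom (a-1) (b-1) = ((a-1).toNat.choose (b-1).toNat : ℚ) :=
          binom_eq_choose (by omega) (by omega)
        rw [binom_eq_choose h0 h1, e1, e2, hn,
          show (a-1).toNat = n by omega, hm, show (b-1).toNat = m by omega,
          Nat.choose_succ_succ]
        push_cast; ring
    · rw [binom_eq_zero (Or.inr (by omega)), binom_eq_zero (Or.inr (by omega)),
        binom_eq_zero (Or.inr (by omega))]; ring
  · rw [binom_eq_zero (Or.inl (by omega)), binom_eq_zero (Or.inl (by omega)),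
      binom_eq_zero (Or.inl (by omega))]; ring

/-- For `j ≥ 3` and `0 ≤ r ≤ j−3`, the sum
`Σ_{s=1}^{j−1} (−1)^s·(s/(j+1−s))·binom(j+1−s, s−r)·C_{j−1−s}` vanishes. -/
theorem S_r_vanishes (j r : ℕ) (hj : 3 ≤ j) (hr : r ≤ j - 3) :
    ∑ s ∈ Finset.Icc 1 (j - 1),
      (-1 : ℚ) ^ s * ((s : ℚ) / ((j : ℚ) + 1 - s)) *
        binom ((j : ℤ) + 1 - s) ((s : ℤ) - r) * catalan (j - 1 - s) = 0 := by
  have hr3 : r + 3 ≤ j := by omega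
  have hrQ : (r:ℚ) + 3 ≤ (j:ℚ) := by exact_mod_cast hr3
  have hN : (j:ℚ) + 1 - (r:ℚ) ≠ 0 := ne_of_gt (by linarith)
  have hpt : ∀ s ∈ Finset.Icc 1 (j-1),
      (-1 : ℚ) ^ s * ((s : ℚ) / ((j : ℚ) + 1 - s)) *
        binom ((j : ℤ) + 1 - s) ((s : ℤ) - r) * (catalan (j - 1 - s) : ℚ)
      = (1 + (r:ℚ)/((j:ℚ)+1-(r:ℚ))) *
          ((-1:ℚ)^s * binom ((j:ℤ)-s) ((s:ℤ)-(r+1:ℕ)) * (catalan (j-1-s) : ℚ))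
        + ((r:ℚ)/((j:ℚ)+1-(r:ℚ))) *
          ((-1:ℚ)^s * binom ((j:ℤ)+1-s) ((s:ℤ)-r) * (catalan (j-1-s) : ℚ)) := by
    intro s hs
    obtain ⟨hs1, hs2⟩ := Finset.mem_Icc.mp hs
    have hsj : s + 1 ≤ j := by omega
    have hsQ : (s:ℚ) + 1 ≤ (j:ℚ) := by exact_mod_cast hsj
    have hden : (j:ℚ) + 1 - (s:ℚ) ≠ 0 := ne_of_gt (by linarith)
    have habs : ((s:ℚ)-(r:ℚ))/((j:ℚ)+1-(s:ℚ)) * binom ((j:ℤ)+1-s) ((s:ℤ)-r)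
        = binom ((j:ℤ)-s) ((s:ℤ)-(r+1:ℕ)) := by
      rcases Nat.lt_trichotomy s r with h | h | h
      · rw [binom_eq_zero (a := (j:ℤ)+1-s) (b := (s:ℤ)-r) (Or.inl (by omega)),
          binom_eq_zero (a := (j:ℤ)-s) (b := (s:ℤ)-((r+1:ℕ):ℤ)) (Or.inl (by push_cast; omega))]
        ring
      · rw [binom_eq_zero (a := (j:ℤ)-s) (b := (s:ℤ)-((r+1:ℕ):ℤ)) (Or.inl (by push_cast; omega)),
          show (s:ℚ)-(r:ℚ) = 0 from by rw [h]; ring]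
        ring
      · by_cases h2 : 2*s ≤ j+1+r
        · set a := j + 1 - s with ha
          set k := s - r with hk
          have e1 : ((j:ℤ)+1-(s:ℤ)).toNat = a := by omega
          have e2 : ((s:ℤ)-(r:ℤ)).toNat = k := by omega
          have e3 : ((j:ℤ)-(s:ℤ)).toNat = a - 1 := by omega
          have e4 : ((s:ℤ)-((r+1:ℕ):ℤ)).toNat = k - 1 := by push_cast; omega
          rw [binom_eq_choose (by omega) (by omega), e1, e2,
            binom_eq_choose (by push_cast; omega) (by push_cast; omega), e3, e4]
          have hcs : a * ((a-1).choose (k-1)) = a.choose k * k := by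
            have h0 := Nat.add_one_mul_choose_eq (a-1) (k-1)
            rwa [show a-1+1 = a by omega, show k-1+1 = k by omega] at h0
          have hcsQ : (a:ℚ) * (((a-1).choose (k-1) : ℕ) : ℚ)
              = ((a.choose k : ℕ) : ℚ) * (k:ℚ) := by exact_mod_cast hcs
          have hxa : ((j:ℚ)+1-(s:ℚ)) = (a:ℚ) := by
            have : (a:ℤ) = (j:ℤ)+1-(s:ℤ) := by omega
            exact_mod_cast this.symm
          have hxk : ((s:ℚ)-(r:ℚ)) = (k:ℚ) := by
            have : (k:ℤ) = (s:ℤ)-(r:ℤ) := by omega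
            exact_mod_cast this.symm
          rw [hxa, hxk, div_mul_eq_mul_div, div_eq_iff (by rw [← hxa]; exact hden)]
          linear_combination (-1:ℚ) * hcsQ
        · rw [binom_eq_zero (a := (j:ℤ)+1-s) (b := (s:ℤ)-r) (Or.inr (by omega)),
            binom_eq_zero (a := (j:ℤ)-s) (b := (s:ℤ)-((r+1:ℕ):ℤ)) (Or.inr (by push_cast; omega))]
          ring
    rw [← habs]
    field_simp
    ring
  rw [Finset.sum_congr rfl hpt, Finset.sum_add_distrib, ← Finset.mul_sum, ← Finset.mul_sum,
    core j (r+1) (by omega) (by omega), mul_zero, zero_add]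
  rcases Nat.eq_zero_or_pos r with hr0 | hr1
  · subst hr0; norm_num
  · have hpas : ∀ s ∈ Finset.Icc 1 (j-1),
        (-1:ℚ)^s * binom ((j:ℤ)+1-s) ((s:ℤ)-r) * (catalan (j-1-s) : ℚ)
        = (-1:ℚ)^s * binom ((j:ℤ)-s) ((s:ℤ)-r) * (catalan (j-1-s) : ℚ)
          + (-1:ℚ)^s * binom ((j:ℤ)-s) ((s:ℤ)-(r+1:ℕ)) * (catalan (j-1-s) : ℚ) := by
      intro s hs
      obtain ⟨hs1, hs2⟩ := Finset.mem_Icc.mp hs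
      have hp := binom_pascal ((j:ℤ)+1-s) ((s:ℤ)-r) (by omega)
      rw [show (j:ℤ)+1-(s:ℤ)-1 = (j:ℤ)-(s:ℤ) from by ring,
        show (s:ℤ)-(r:ℤ)-1 = (s:ℤ)-((r+1:ℕ):ℤ) from by push_cast; ring] at hp
      rw [hp]; ring
    rw [Finset.sum_congr rfl hpas, Finset.sum_add_distrib,
      core j r (by omega) (by omega), core j (r+1) (by omega) (by omega)]
    norm_num
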